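/- arXiv:1406.2722 — 7 statements merged into one kernel-verified Lean document; each statement's English description precedes it below -/
import Mathlib

section
/- Let K be a field and let A = Matrix.fromBlocks X Y Z Q be an (n+m)×(n+m) matrix over K, where X is n×n and Q is m×m, and suppose det(1−Q) ≠ 0. Then for every k and all finsets S, T ⊆ Fin n with S.card = T.card = k, one has ∑_{W ⊆ Fin m} (−1)^{W.card} · det A[Ŝ ∪ Ŵ, T̂ ∪ Ŵ] = det(1−Q) · det (X + Y·(1−Q)⁻¹·Z)[S,T]. (This is the linear-algebraic content of the main theorem identifying the exterior powers of the random walk invariant X + Y(1−Q)⁻¹Z with the graded components of the tangle functor divided by its degree-zero part.) -/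
open Matrix

/-- Determinant of the submatrix of `A` with rows indexed by the elements of `S` and
columns indexed by the elements of `T`, each listed in increasing order.
Defined to be `0` if the cardinalities of `S` and `T` differ
(the empty determinant is `1`). -/
noncomputable def fminor {ι R : Type*} [LinearOrder ι] [CommRing R]
    (A : Matrix ι ι R) (S T : Finset ι) : R :=
  if h : S.card = T.card then
    (Matrix.of fun i j : Fin T.card =>
      A (S.orderEmbOfFin h i) (T.orderEmbOfFin rfl j)).det
  else 0

/-- `Fin n ⊕ Fin m` linearly ordered so that every element of the left summand precedes
every element of the right summand, each summand with its natural order. -/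
abbrev SumLexIdx (n m : ℕ) := Lex (Fin n ⊕ Fin m)

/-- Inclusion of `Fin n` as the left block. -/
def inlL {n m : ℕ} (i : Fin n) : SumLexIdx n m := toLex (Sum.inl i)

/-- Inclusion of `Fin m` as the right block. -/
def inrL {n m : ℕ} (j : Fin m) : SumLexIdx n m := toLex (Sum.inr j)

/-- View a matrix indexed by `Fin n ⊕ Fin m` as a matrix indexed by the linearly
ordered index type `SumLexIdx n m`. -/
def toLexMat {n m : ℕ} {R : Type*} (A : Matrix (Fin n ⊕ Fin m) (Fin n ⊕ Fin m) R) :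
    Matrix (SumLexIdx n m) (SumLexIdx n m) R := fun i j => A (ofLex i) (ofLex j)

/-! ### Auxiliary lemmas -/

lemma fminor_eq_det_submatrix {ι R : Type*} [LinearOrder ι] [CommRing R]
    (A : Matrix ι ι R) {S T : Finset ι} {N : ℕ} (hS : S.card = N) (hT : T.card = N)
    {r c : Fin N → ι} (hr : StrictMono r) (hc : StrictMono c)
    (hrS : ∀ i, r i ∈ S) (hcT : ∀ i, c i ∈ T) :
    fminor A S T = (A.submatrix r c).det := by
  subst hT
  rw [fminor, dif_pos hS]
  congr 1
  rw [Finset.orderEmbOfFin_unique hS hrS hr, Finset.orderEmbOfFin_unique rfl hcT hc]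
  rfl

lemma strictMono_elim_comp {α : Type*} [Preorder α] {k w : ℕ} (f : Fin k ⊕ Fin w → α)
    (h1 : StrictMono (f ∘ Sum.inl)) (h2 : StrictMono (f ∘ Sum.inr))
    (h12 : ∀ a b, f (Sum.inl a) < f (Sum.inr b)) :
    StrictMono (f ∘ ⇑finSumFinEquiv.symm) := by
  intro i j hij
  have hi := (finSumFinEquiv.apply_symm_apply i).symm
  have hj := (finSumFinEquiv.apply_symm_apply j).symm
  rw [Fin.lt_def] at hij
  rcases hsi : finSumFinEquiv.symm i with a | b <;> rcases hsj : finSumFinEquiv.symm j with a' | b' <;>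
      rw [hsi] at hi <;> rw [hsj] at hj <;>
      simp only [finSumFinEquiv_apply_left, finSumFinEquiv_apply_right] at hi hj <;>
      rw [hi, hj] at hij <;>
      simp only [Fin.coe_castAdd, Fin.coe_natAdd] at hij <;>
      simp only [Function.comp_apply, hsi, hsj]
  · exact h1 (by rwa [Fin.lt_def])
  · exact h12 _ _
  · exact absurd hij (by have := a'.isLt; omega)
  · exact h2 (by rw [Fin.lt_def]; omega)

lemma inlL_strictMono {n m : ℕ} : StrictMono (inlL (n := n) (m := m)) :=
  fun _ _ h => Sum.Lex.inl_lt_inl_iff.mpr h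

lemma inrL_strictMono {n m : ℕ} : StrictMono (inrL (n := n) (m := m)) :=
  fun _ _ h => Sum.Lex.inr_lt_inr_iff.mpr h

lemma card_union_lex {n m : ℕ} (S : Finset (Fin n)) (W : Finset (Fin m)) :
    (S.image inlL ∪ W.image inrL).card = S.card + W.card := by
  rw [Finset.card_union_of_disjoint, Finset.card_image_of_injective _ inlL_strictMono.injective,
    Finset.card_image_of_injective _ inrL_strictMono.injective]
  rw [Finset.disjoint_left]
  rintro x hx hx'
  obtain ⟨a, -, rfl⟩ := Finset.mem_image.mp hx
  obtain ⟨b, -, hab⟩ := Finset.mem_image.mp hx'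
  simp [inlL, inrL] at hab

lemma stepA {K : Type*} [CommRing K] {n m k : ℕ}
    (A : Matrix (Fin n ⊕ Fin m) (Fin n ⊕ Fin m) K)
    {S T : Finset (Fin n)} (hS : S.card = k) (hT : T.card = k) (W : Finset (Fin m)) :
    fminor (toLexMat A) (S.image inlL ∪ W.image inrL) (T.image inlL ∪ W.image inrL)
      = (A.submatrix (Sum.map (S.orderEmbOfFin hS) (W.orderEmbOfFin rfl))
          (Sum.map (T.orderEmbOfFin hT) (W.orderEmbOfFin rfl))).det := by
  set eS := S.orderEmbOfFin hS
  set eT := T.orderEmbOfFin hT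
  set eW := W.orderEmbOfFin (rfl : W.card = W.card)
  have key : ∀ (U : Finset (Fin n)) (hU : U.card = k),
      StrictMono ((Sum.elim (inlL ∘ U.orderEmbOfFin hU) (inrL ∘ eW) :
        Fin k ⊕ Fin W.card → SumLexIdx n m) ∘ ⇑finSumFinEquiv.symm) := by
    intro U hU
    apply strictMono_elim_comp
    · exact fun a b h => inlL_strictMono ((U.orderEmbOfFin hU).strictMono h)
    · exact fun a b h => inrL_strictMono (eW.strictMono h)
    · exact fun a b => Sum.Lex.inl_lt_inr _ _
  have mem : ∀ (U : Finset (Fin n)) (hU : U.card = k) (i : Fin (k + W.card)),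
      (Sum.elim (inlL ∘ U.orderEmbOfFin hU) (inrL ∘ eW) ∘ ⇑finSumFinEquiv.symm) i
        ∈ U.image inlL ∪ W.image inrL := by
    intro U hU i
    rcases h : finSumFinEquiv.symm i with a | b <;>
      simp only [Function.comp_apply, h, Sum.elim_inl, Sum.elim_inr] <;>
      first
      | exact Finset.mem_union_left _ (Finset.mem_image_of_mem _ (Finset.orderEmbOfFin_mem _ _ _))
      | exact Finset.mem_union_right _ (Finset.mem_image_of_mem _ (Finset.orderEmbOfFin_mem _ _ _))
  rw [fminor_eq_det_submatrix (toLexMat A)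
      ((card_union_lex S W).trans (by rw [hS]))
      ((card_union_lex T W).trans (by rw [hT]))
      (key S hS) (key T hT) (mem S hS) (mem T hT)]
  rw [show (toLexMat A).submatrix
        ((Sum.elim (inlL ∘ eS) (inrL ∘ eW)) ∘ ⇑finSumFinEquiv.symm)
        ((Sum.elim (inlL ∘ eT) (inrL ∘ eW)) ∘ ⇑finSumFinEquiv.symm)
      = (A.submatrix (Sum.map eS eW) (Sum.map eT eW)).submatrix
          ⇑finSumFinEquiv.symm ⇑finSumFinEquiv.symm from ?_]
  · exact det_submatrix_equiv_self finSumFinEquiv.symm _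
  · ext i j
    rcases hi : finSumFinEquiv.symm i with a | b <;> rcases hj : finSumFinEquiv.symm j with a' | b' <;>
      simp [toLexMat, submatrix, hi, hj, inlL, inrL]

section StepB

variable {R : Type*} [CommRing R] {k m : ℕ}

/-- The subset of `Fin k ⊕ Fin m` consisting of all of the left block together with
`W` in the right block. -/
def gW (W : Finset (Fin m)) : Finset (Fin k ⊕ Fin m) :=
  Finset.univ.image Sum.inl ∪ W.image Sum.inr

lemma mem_gW_inl (W : Finset (Fin m)) (a : Fin k) : Sum.inl a ∈ gW (k := k) W :=
  Finset.mem_union_left _ (Finset.mem_image_of_mem _ (Finset.mem_univ a))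

lemma mem_gW_inr (W : Finset (Fin m)) (b : Fin m) : Sum.inr b ∈ gW (k := k) W ↔ b ∈ W := by
  simp [gW]

lemma det_piecewise_eq (B : Matrix (Fin k ⊕ Fin m) (Fin k ⊕ Fin m) R) (W : Finset (Fin m)) :
    (Matrix.of ((gW W).piecewise B (fromBlocks 0 0 0 1))).det
      = (B.submatrix (Sum.map id ⇑(W.orderEmbOfFin rfl)) (Sum.map id ⇑(W.orderEmbOfFin rfl))).det := by
  classical
  let e : (Fin k ⊕ {x // x ∈ W}) ⊕ {x // ¬ x ∈ W} ≃ Fin k ⊕ Fin m :=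
    (Equiv.sumAssoc _ _ _).trans (Equiv.sumCongr (Equiv.refl _) (Equiv.sumCompl (· ∈ W)))
  rw [← det_submatrix_equiv_self e]
  have hsub : (Matrix.of ((gW W).piecewise B (fromBlocks 0 0 0 1))).submatrix e e =
      fromBlocks (B.submatrix (Sum.map id Subtype.val) (Sum.map id Subtype.val))
        (Matrix.of fun i (j : {x // ¬ x ∈ W}) => B (Sum.map id Subtype.val i) (Sum.inr j.val))
        0 1 := by
    ext i j
    have he : ∀ x, e x = Sum.map id (Equiv.sumCompl (· ∈ W)) ((Equiv.sumAssoc _ _ _) x) := by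
      intro x; rfl
    rcases i with (a | ⟨b, hb⟩) | ⟨b, hb⟩ <;> rcases j with (a' | ⟨b', hb'⟩) | ⟨b', hb'⟩ <;>
      simp only [submatrix_apply, he, Equiv.sumAssoc_apply_inl_inl, Equiv.sumAssoc_apply_inl_inr,
        Equiv.sumAssoc_apply_inr, Sum.map_inl, Sum.map_inr, id_eq,
        Equiv.sumCompl_apply_inl, Equiv.sumCompl_apply_inr, Matrix.of_apply,
        fromBlocks_apply₁₁, fromBlocks_apply₁₂, fromBlocks_apply₂₁, fromBlocks_apply₂₂]
    · exact congrFun (Finset.piecewise_eq_of_mem (gW W) B _ (mem_gW_inl W a)) _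
    · exact congrFun (Finset.piecewise_eq_of_mem (gW W) B _ (mem_gW_inl W a)) _
    · exact congrFun (Finset.piecewise_eq_of_mem (gW W) B _ (mem_gW_inl W a)) _
    · exact congrFun (Finset.piecewise_eq_of_mem (gW W) B _ ((mem_gW_inr W b).mpr hb)) _
    · exact congrFun (Finset.piecewise_eq_of_mem (gW W) B _ ((mem_gW_inr W b).mpr hb)) _
    · exact congrFun (Finset.piecewise_eq_of_mem (gW W) B _ ((mem_gW_inr W b).mpr hb)) _
    · refine (congrFun (Finset.piecewise_eq_of_notMem (gW W) B _ (fun h => hb ((mem_gW_inr W b).mp h))) _).trans ?_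
      simp
    · refine (congrFun (Finset.piecewise_eq_of_notMem (gW W) B _ (fun h => hb ((mem_gW_inr W b).mp h))) _).trans ?_
      simp only [fromBlocks_apply₂₂, Matrix.zero_apply]
      exact Matrix.one_apply_ne (by rintro rfl; exact hb hb')
    · refine (congrFun (Finset.piecewise_eq_of_notMem (gW W) B _ (fun h => hb ((mem_gW_inr W b).mp h))) _).trans ?_
      simp only [fromBlocks_apply₂₂]
      simp [Matrix.one_apply, Subtype.ext_iff]
  rw [hsub, det_fromBlocks_zero₂₁, det_one, mul_one]
  let e2 : (Fin k ⊕ Fin W.card) ≃ (Fin k ⊕ {x // x ∈ W}) :=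
    Equiv.sumCongr (Equiv.refl _) (W.orderIsoOfFin rfl).toEquiv
  rw [← det_submatrix_equiv_self e2]
  congr 1
  ext i j
  rcases i with a | b <;> rcases j with a' | b' <;>
    simp [e2, Finset.coe_orderIsoOfFin_apply]

lemma gW_injective : Function.Injective (gW (k := k) (m := m)) := by
  intro W W' h
  ext b
  rw [← mem_gW_inr (k := k) W b, ← mem_gW_inr (k := k) W' b, h]

lemma det_sum_subsets (B : Matrix (Fin k ⊕ Fin m) (Fin k ⊕ Fin m) R) :
    ∑ W : Finset (Fin m), (-1:R)^W.card *
      (B.submatrix (Sum.map id ⇑(W.orderEmbOfFin rfl)) (Sum.map id ⇑(W.orderEmbOfFin rfl))).det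
    = (-1:R)^m * (B - fromBlocks 0 0 0 1).det := by
  classical
  set E : Matrix (Fin k ⊕ Fin m) (Fin k ⊕ Fin m) R := fromBlocks 0 0 0 1 with hE
  have hexp : (B - E).det
      = ∑ s : Finset (Fin k ⊕ Fin m), (Matrix.of (s.piecewise B (-E))).det := by
    have h1 : B - E = Matrix.of ((fun i => B i) + fun i => (-E) i) := by
      ext i j; simp [sub_eq_add_neg]
    rw [h1]
    exact Matrix.detRowAlternating.toMultilinearMap.map_add_univ (fun i => B i) (fun i => (-E) i)
  have hvanish : ∀ s ∈ (Finset.univ : Finset (Finset (Fin k ⊕ Fin m))),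
      s ∉ Finset.univ.image (gW (k := k) (m := m)) →
      (Matrix.of (s.piecewise B (-E))).det = 0 := by
    intro s _ hs
    have : ∃ a : Fin k, Sum.inl a ∉ s := by
      by_contra hcon
      push_neg at hcon
      apply hs
      refine Finset.mem_image.mpr
        ⟨Finset.univ.filter (fun b => Sum.inr b ∈ s), Finset.mem_univ _, ?_⟩
      ext x
      rcases x with a | b
      · simpa [hcon a] using mem_gW_inl _ a
      · simp [mem_gW_inr]
    obtain ⟨a, ha⟩ := this
    apply det_eq_zero_of_row_eq_zero (Sum.inl a)
    intro j
    rw [Matrix.of_apply]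
    refine (congrFun (Finset.piecewise_eq_of_notMem s B (-E) ha) j).trans ?_
    rcases j with a' | b' <;> simp [hE]
  have himg : ∑ s : Finset (Fin k ⊕ Fin m), (Matrix.of (s.piecewise B (-E))).det
      = ∑ W : Finset (Fin m), (Matrix.of ((gW W).piecewise B (-E))).det := by
    calc ∑ s : Finset (Fin k ⊕ Fin m), (Matrix.of (s.piecewise B (-E))).det
        = ∑ s ∈ Finset.univ.image (gW (k := k) (m := m)),
            (Matrix.of (s.piecewise B (-E))).det :=
          (Finset.sum_subset (Finset.subset_univ _) (fun s hs hn => hvanish s hs hn)).symm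
      _ = ∑ W : Finset (Fin m), (Matrix.of ((gW W).piecewise B (-E))).det :=
          Finset.sum_image (fun x _ y _ h => gW_injective h)
  have hper : ∀ W : Finset (Fin m), (Matrix.of ((gW W).piecewise B (-E))).det
      = (-1:R)^(m - W.card) *
        (B.submatrix (Sum.map id ⇑(W.orderEmbOfFin rfl))
          (Sum.map id ⇑(W.orderEmbOfFin rfl))).det := by
    intro W
    have hfac : Matrix.of ((gW W).piecewise B (-E))
        = Matrix.diagonal (fun i => if i ∈ gW (k := k) W then (1:R) else -1)
          * Matrix.of ((gW W).piecewise B E) := by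
      ext i j
      rw [Matrix.diagonal_mul, Matrix.of_apply, Matrix.of_apply]
      by_cases hi : i ∈ gW (k := k) W
      · rw [if_pos hi, one_mul]
        exact congrFun ((Finset.piecewise_eq_of_mem (gW W) B (-E) hi).trans
          (Finset.piecewise_eq_of_mem (gW W) B E hi).symm) j
      · rw [if_neg hi, neg_one_mul]
        refine (congrFun (Finset.piecewise_eq_of_notMem (gW W) B (-E) hi) j).trans ?_
        refine Eq.trans ?_ (congrArg Neg.neg (congrFun (Finset.piecewise_eq_of_notMem (gW W) B E hi) j)).symm
        rfl
    rw [hfac, det_mul, det_diagonal, det_piecewise_eq]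
    congr 1
    rw [Fintype.prod_sum_type]
    have h1 : ∀ a : Fin k, (if Sum.inl a ∈ gW (k := k) (m := m) W then (1:R) else -1) = 1 :=
      fun a => if_pos (mem_gW_inl W a)
    have h2 : ∀ b : Fin m, (if Sum.inr b ∈ gW (k := k) W then (1:R) else -1)
        = if b ∈ W then 1 else -1 := by
      intro b
      by_cases hb : b ∈ W
      · rw [if_pos ((mem_gW_inr W b).mpr hb), if_pos hb]
      · rw [if_neg (fun h => hb ((mem_gW_inr W b).mp h)), if_neg hb]
    simp only [h1, h2, Finset.prod_const_one, one_mul]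
    rw [Finset.prod_ite, Finset.prod_const_one, one_mul, Finset.prod_const]
    congr 1
    have : Finset.univ.filter (fun b => ¬ b ∈ W) = Wᶜ := by ext b; simp
    rw [this, Finset.card_compl, Fintype.card_fin]
  rw [hexp, himg, Finset.mul_sum]
  apply Finset.sum_congr rfl
  intro W _
  have hw : W.card ≤ m := by
    have := Finset.card_le_univ W
    simpa using this
  have h3 : m + (m - W.card) = 2 * (m - W.card) + W.card := by omega
  have hpow : (-1:R)^m * (-1)^(m - W.card) = (-1:R)^W.card := by
    rw [← pow_add, h3, pow_add, pow_mul, neg_one_sq, one_pow, one_mul]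
  rw [hper, ← mul_assoc, hpow]

end StepB

/-- For `A = fromBlocks X Y Z Q` with `det (1 - Q) ≠ 0`, the alternating sum over
subsets `W` of the right block of the minors of `A` on rows `Ŝ ∪ Ŵ` and columns
`T̂ ∪ Ŵ` equals `det (1 - Q)` times the corresponding minor of the random walk
invariant `X + Y (1 - Q)⁻¹ Z`. -/
theorem alt_sum_minors_eq_det_mul_minor_schur
    {K : Type*} [Field K] {n m : ℕ}
    (X : Matrix (Fin n) (Fin n) K) (Y : Matrix (Fin n) (Fin m) K)
    (Z : Matrix (Fin m) (Fin n) K) (Q : Matrix (Fin m) (Fin m) K)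
    (hQ : (1 - Q).det ≠ 0) (k : ℕ) (S T : Finset (Fin n))
    (hS : S.card = k) (hT : T.card = k) :
    ∑ W : Finset (Fin m), (-1 : K) ^ W.card *
        fminor (toLexMat (Matrix.fromBlocks X Y Z Q))
          (S.image inlL ∪ W.image inrL) (T.image inlL ∪ W.image inrL)
      = (1 - Q).det * fminor (X + Y * (1 - Q)⁻¹ * Z) S T := by
  classical
  set eS : Fin k → Fin n := ⇑(S.orderEmbOfFin hS) with heS
  set eT : Fin k → Fin n := ⇑(T.orderEmbOfFin hT) with heT
  set A : Matrix (Fin n ⊕ Fin m) (Fin n ⊕ Fin m) K := Matrix.fromBlocks X Y Z Q with hA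
  set B : Matrix (Fin k ⊕ Fin m) (Fin k ⊕ Fin m) K :=
    A.submatrix (Sum.map eS id) (Sum.map eT id) with hB
  have hBW : ∀ W : Finset (Fin m),
      A.submatrix (Sum.map (S.orderEmbOfFin hS) (W.orderEmbOfFin rfl))
          (Sum.map (T.orderEmbOfFin hT) (W.orderEmbOfFin rfl))
        = B.submatrix (Sum.map id ⇑(W.orderEmbOfFin rfl)) (Sum.map id ⇑(W.orderEmbOfFin rfl)) := by
    intro W
    ext i j
    rcases i with a | b <;> rcases j with a' | b' <;> rfl
  have lhs_eq : ∑ W : Finset (Fin m), (-1 : K) ^ W.card *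
        fminor (toLexMat A) (S.image inlL ∪ W.image inrL) (T.image inlL ∪ W.image inrL)
      = (-1:K)^m * (B - fromBlocks 0 0 0 1).det := by
    rw [← det_sum_subsets B]
    apply Finset.sum_congr rfl
    intro W _
    rw [stepA A hS hT W, hBW W]
  rw [lhs_eq]
  -- identify the block structure of `B - fromBlocks 0 0 0 1`
  have hBsub : B - fromBlocks 0 0 0 1 =
      fromBlocks (X.submatrix eS eT) (Y.submatrix eS id) (Z.submatrix id eT) (Q - 1) := by
    ext i j
    rcases i with a | b <;> rcases j with a' | b' <;>
      simp [hB, hA, fromBlocks, Matrix.sub_apply]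
  rw [hBsub]
  -- pull the sign into the bottom rows
  have hsign : (-1:K)^m *
      (fromBlocks (X.submatrix eS eT) (Y.submatrix eS id) (Z.submatrix id eT) (Q - 1)).det
      = (fromBlocks (X.submatrix eS eT) (Y.submatrix eS id) (-(Z.submatrix id eT)) (1 - Q)).det := by
    have hmul : (fromBlocks (1 : Matrix (Fin k) (Fin k) K) 0 0 (-1 : Matrix (Fin m) (Fin m) K)) *
        fromBlocks (X.submatrix eS eT) (Y.submatrix eS id) (Z.submatrix id eT) (Q - 1)
        = fromBlocks (X.submatrix eS eT) (Y.submatrix eS id) (-(Z.submatrix id eT)) (1 - Q) := by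
      rw [fromBlocks_multiply]
      refine Matrix.fromBlocks_inj.mpr ⟨?_, ?_, ?_, ?_⟩ <;>
        simp [Matrix.neg_mul, neg_sub]
    have hdet1 : (fromBlocks (1 : Matrix (Fin k) (Fin k) K) 0 0
        (-1 : Matrix (Fin m) (Fin m) K)).det = (-1:K)^m := by
      rw [det_fromBlocks_zero₂₁, det_one, one_mul, det_neg, det_one, mul_one, Fintype.card_fin]
    rw [← hmul, det_mul, hdet1]
  rw [hsign]
  -- Schur complement
  have hU : IsUnit (1 - Q).det := isUnit_iff_ne_zero.mpr hQ
  haveI : Invertible (1 - Q) := (1 - Q).invertibleOfIsUnitDet hU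
  rw [det_fromBlocks₂₂, invOf_eq_nonsing_inv, Matrix.mul_neg, sub_neg_eq_add]
  congr 1
  have hmem : ∀ (U : Finset (Fin n)) (hU' : U.card = k) (i : Fin k),
      (U.orderEmbOfFin hU') i ∈ U := fun U hU' i => Finset.orderEmbOfFin_mem U hU' i
  rw [fminor_eq_det_submatrix (X + Y * (1 - Q)⁻¹ * Z) hS hT
      (S.orderEmbOfFin hS).strictMono (T.orderEmbOfFin hT).strictMono (hmem S hS) (hmem T hT)]
  congr 1
end

section
/- Let R be an integral domain and let A = Matrix.fromBlocks X Y Z Q be an (n+m)×(n+m) matrix over R, where X is n×n and Q is m×m. Set δ = det(1−Q) and assume δ ≠ 0, and let M' = δ•X + Y·adjugate(1−Q)·Z (an n×n matrix over R). Then for every k ≥ 1 and all finsets S, T ⊆ Fin n with S.card = T.card = k, δ^{k−1} divides det M'[S,T] in R. (This is the linear-algebraic form of the corollary that the degree-zero invariant to the power k−1 divides all k×k minors of the degree-one invariant.) -/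
open Matrix

lemma schur_key {R : Type*} [CommRing R] {k m : ℕ}
    (X : Matrix (Fin k) (Fin k) R) (Y : Matrix (Fin k) (Fin m) R)
    (Z : Matrix (Fin m) (Fin k) R) (B : Matrix (Fin m) (Fin m) R) :
    (B.det • X + Y * B.adjugate * Z).det * B.det
      = (fromBlocks X Y (-Z) B).det * B.det ^ k := by
  have h : fromBlocks X Y (-Z) B *
      fromBlocks (B.det • (1 : Matrix (Fin k) (Fin k) R)) 0 (B.adjugate * Z) 1
      = fromBlocks (B.det • X + Y * B.adjugate * Z) Y 0 B := by
    rw [fromBlocks_multiply]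
    simp [Matrix.mul_smul, ← Matrix.mul_assoc, Matrix.mul_adjugate, Matrix.smul_mul]
  have := congrArg Matrix.det h
  rw [Matrix.det_mul, Matrix.det_fromBlocks_zero₁₂, Matrix.det_fromBlocks_zero₂₁,
    Matrix.det_one, Matrix.det_smul, Matrix.det_one, Fintype.card_fin, mul_one, mul_one] at this
  exact this.symm

/-- Over an integral domain, with `δ = det (1 - Q) ≠ 0` and
`M' = δ • X + Y ⬝ adjugate (1 - Q) ⬝ Z`, the power `δ^(k-1)` divides every
`k × k` minor of `M'` (for `k ≥ 1`). -/
theorem det_pow_dvd_minor_of_schur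
    {R : Type*} [CommRing R] [IsDomain R] {n m : ℕ}
    (X : Matrix (Fin n) (Fin n) R) (Y : Matrix (Fin n) (Fin m) R)
    (Z : Matrix (Fin m) (Fin n) R) (Q : Matrix (Fin m) (Fin m) R)
    (δ : R) (hδdef : δ = (1 - Q).det) (hδ : δ ≠ 0)
    (M' : Matrix (Fin n) (Fin n) R)
    (hM' : M' = δ • X + Y * (1 - Q).adjugate * Z)
    (k : ℕ) (hk : 1 ≤ k) (S T : Finset (Fin n))
    (hS : S.card = k) (hT : T.card = k) :
    δ ^ (k - 1) ∣ fminor M' S T := by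
  subst hT
  have hST : S.card = T.card := hS
  rw [fminor, dif_pos hST]
  set r := S.orderEmbOfFin hST
  set c := T.orderEmbOfFin rfl
  set B : Matrix (Fin m) (Fin m) R := 1 - Q with hB
  have hmat : (Matrix.of fun i j : Fin T.card => M' (r i) (c j))
      = B.det • (X.submatrix r c) + (Y.submatrix r id) * B.adjugate * (Z.submatrix id c) := by
    ext i j
    simp [hM', hδdef, Matrix.mul_apply, Matrix.add_apply, Finset.mul_sum, Finset.sum_mul]
  rw [hmat]
  have key := schur_key (X.submatrix r c) (Y.submatrix r id) (Z.submatrix id c) B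
  have hδB : δ = B.det := hδdef
  have hTk : 1 ≤ T.card := hk
  have hpow : B.det ^ T.card = B.det ^ (T.card - 1) * B.det := by
    conv_lhs => rw [← Nat.sub_add_cancel hTk]
    ring
  rw [hpow] at key
  have hcancel : (B.det • (X.submatrix r c) + (Y.submatrix r id) * B.adjugate * (Z.submatrix id c)).det
      = B.det ^ (T.card - 1) * (fromBlocks (X.submatrix r c) (Y.submatrix r id) (-(Z.submatrix id c)) B).det := by
    apply mul_right_cancel₀ (hδB ▸ hδ)
    linear_combination key
  rw [hδB, hcancel]
  exact Dvd.intro _ rfl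
end

section
/- Let σ be a permutation of Fin n ⊕ Fin m and let Q be the m×m matrix over ℚ defined by Q i j = 1 if σ (Sum.inr j) = Sum.inr i and Q i j = 0 otherwise. Then Q is nilpotent if and only if for every j : Fin m there exist k ≥ 1 and i : Fin n with σ^k (Sum.inr j) = Sum.inl i (i.e., no orbit of σ is entirely contained in the right summand). (This is the algebraic core of the lemma that the closure of a braid is a string link if and only if the closure block of its permutation matrix is nilpotent.) -/
/-- For a permutation `σ` of `Fin n ⊕ Fin m`, the 0-1 matrix `Q` recording the part of
`σ` mapping the right summand into itself is nilpotent if and only if every point of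
the right summand is eventually carried into the left summand by iterating `σ`. -/
theorem closure_block_nilpotent_iff
    {n m : ℕ} (σ : Equiv.Perm (Fin n ⊕ Fin m))
    (Q : Matrix (Fin m) (Fin m) ℚ)
    (hQ : ∀ i j, Q i j = if σ (Sum.inr j) = Sum.inr i then 1 else 0) :
    IsNilpotent Q ↔
      ∀ j : Fin m, ∃ k : ℕ, 1 ≤ k ∧ ∃ i : Fin n,
        (σ ^ k) (Sum.inr j) = Sum.inl i := by
  -- Key lemma: entries of powers of Q
  have key : ∀ k (i j : Fin m), (Q ^ k) i j =
      if (σ ^ k) (Sum.inr j) = Sum.inr i ∧ ∀ t ≤ k, ((σ ^ t) (Sum.inr j)).isRight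
      then 1 else 0 := by
    intro k
    induction k with
    | zero =>
      intro i j
      simp only [pow_zero, Matrix.one_apply, Equiv.Perm.one_apply, Nat.le_zero]
      by_cases h : i = j
      · subst h; simp
      · rw [if_neg h, if_neg]
        rintro ⟨h1, -⟩
        exact h (Sum.inr_injective h1).symm
    | succ k ih =>
      intro i j
      rw [pow_succ, Matrix.mul_apply]
      cases h : σ (Sum.inr j) with
      | inl x =>
        have hz : ∀ l, Q l j = 0 := fun l => by rw [hQ, h]; simp
        rw [Finset.sum_eq_zero (fun l _ => by rw [hz]; ring)]
        rw [if_neg]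
        rintro ⟨-, h2⟩
        have := h2 1 (by omega)
        rw [pow_one, h] at this
        simp at this
      | inr l₀ =>
        have hstep : ∀ t : ℕ, (σ ^ (t+1)) (Sum.inr j) = (σ ^ t) (Sum.inr l₀) := by
          intro t
          rw [pow_succ, Equiv.Perm.mul_apply, h]
        have hQl : ∀ l, Q l j = if l = l₀ then 1 else 0 := by
          intro l
          rw [hQ, h]
          simp [Sum.inr.injEq, eq_comm]
        rw [Finset.sum_eq_single l₀
          (fun l _ hl => by rw [hQl l, if_neg hl]; ring)
          (fun habs => absurd (Finset.mem_univ l₀) habs)]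
        rw [hQl l₀, if_pos rfl, mul_one, ih]
        congr 1
        apply propext
        constructor
        · rintro ⟨h1, h2⟩
          refine ⟨by rw [hstep]; exact h1, ?_⟩
          intro t ht
          cases t with
          | zero => simp
          | succ s => rw [hstep]; exact h2 s (by omega)
        · rintro ⟨h1, h2⟩
          refine ⟨by rw [← hstep]; exact h1, ?_⟩
          intro t ht
          rw [← hstep]
          exact h2 (t+1) (by omega)
  constructor
  · rintro ⟨N, hN⟩ j
    by_contra hc
    push_neg at hc
    have hright : ∀ k, ((σ ^ k) (Sum.inr j)).isRight := by
      intro k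
      cases k with
      | zero => simp
      | succ k' =>
        cases hk : (σ ^ (k'+1)) (Sum.inr j) with
        | inl x => exact absurd hk (hc (k'+1) (by omega) x)
        | inr y => simp
    have hN1 : Q ^ (N+1) = 0 := by rw [pow_succ, hN, Matrix.zero_mul]
    obtain ⟨i, hi⟩ := Sum.isRight_iff.mp (hright (N+1))
    have hkey := key (N+1) i j
    rw [hN1, Matrix.zero_apply, if_pos ⟨hi, fun t _ => hright t⟩] at hkey
    exact absurd hkey.symm one_ne_zero
  · intro h
    refine ⟨m+1, ?_⟩
    ext i j
    rw [key, Matrix.zero_apply, if_neg]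
    rintro ⟨-, h2⟩
    have hf : ∀ t : Fin (m+2), ∃ y, (σ ^ (t : ℕ)) (Sum.inr j) = Sum.inr y := by
      intro t
      exact Sum.isRight_iff.mp (h2 t (by omega))
    choose f hfy using hf
    obtain ⟨a, b, hab, heq⟩ := Fintype.exists_ne_map_eq_of_card_lt f (by simp)
    -- wlog a < b
    wlog hlt : (a : ℕ) < (b : ℕ) generalizing a b
    · exact this b a hab.symm heq.symm (by omega)
    · set x : Fin n ⊕ Fin m := Sum.inr j with hx
      have hEq : (σ ^ (a : ℕ)) x = (σ ^ (b : ℕ)) x := by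
        rw [hfy a, hfy b, heq]
      set p : ℕ := (b : ℕ) - (a : ℕ) with hp
      have hp1 : 1 ≤ p := by omega
      have hper : (σ ^ p) x = x := by
        have h1 : (σ ^ (a : ℕ)) ((σ ^ p) x) = (σ ^ (a : ℕ)) x := by
          rw [← Equiv.Perm.mul_apply, ← pow_add]
          have : (a : ℕ) + p = (b : ℕ) := by omega
          rw [this, ← hEq]
        exact (σ ^ (a : ℕ)).injective h1
      have hmul : ∀ q, (σ ^ (p * q)) x = x := by
        intro q
        induction q with
        | zero => simp
        | succ q' ihq =>
          have : p * (q' + 1) = p * q' + p := by ring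
          rw [this, pow_add, Equiv.Perm.mul_apply, hper, ihq]
      have hmod : ∀ k, (σ ^ k) x = (σ ^ (k % p)) x := by
        intro k
        conv_lhs => rw [← Nat.mod_add_div k p]
        rw [pow_add, Equiv.Perm.mul_apply, hmul]
      obtain ⟨k, hk1, i0, hki⟩ := h j
      have hr : ((σ ^ (k % p)) x).isRight := by
        apply h2
        have : k % p < p := Nat.mod_lt _ (by omega)
        have : p ≤ m + 1 := by
          have := b.isLt
          omega
        omega
      rw [hmod k] at hki
      rw [hki] at hr
      simp at hr
end

section
/- Let Q : ℝ → Matrix (Fin m) (Fin m) ℝ be continuous in a neighborhood of t = 1 and suppose that the matrix Q 1 is nilpotent. Then for every d > 0 there exist ε > 0 and C > 0 such that for all t with |t − 1| < ε and all natural numbers N, ‖(Q t)^N‖ ≤ C · d^N. -/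
open Matrix

/- Equip square matrices with the `L∞` operator norm
(maximum over rows of the sum of absolute values of the entries). -/
attribute [local instance] Matrix.linftyOpNormedRing

private lemma aux_pow_bound {m k : ℕ} (hk : 0 < k) {A : Matrix (Fin m) (Fin m) ℝ}
    {d B C : ℝ} (hd : 0 < d) (hB : d ≤ B) (hA : ‖A‖ ≤ B) (hAk : ‖A ^ k‖ ≤ d ^ k)
    (hC1 : (B / d) ^ k ≤ C) (hC2 : ‖(1 : Matrix (Fin m) (Fin m) ℝ)‖ ≤ C) :
    ∀ N : ℕ, ‖A ^ N‖ ≤ C * d ^ N := by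
  have hBd : (1 : ℝ) ≤ B / d := (one_le_div hd).2 hB
  intro N
  induction N using Nat.strong_induction_on with
  | _ N ih =>
    rcases le_or_gt k N with h | h
    · have hNk : N = k + (N - k) := by omega
      calc ‖A ^ N‖ = ‖A ^ k * A ^ (N - k)‖ := by rw [← pow_add, ← hNk]
        _ ≤ ‖A ^ k‖ * ‖A ^ (N - k)‖ := norm_mul_le _ _
        _ ≤ d ^ k * (C * d ^ (N - k)) := by
            apply mul_le_mul hAk (ih _ (by omega)) (norm_nonneg _)
            positivity
        _ = C * (d ^ k * d ^ (N - k)) := by ring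
        _ = C * d ^ N := by rw [← pow_add, Nat.add_sub_cancel' h]
    · rcases Nat.eq_zero_or_pos N with h0 | h0
      · rw [h0, pow_zero, pow_zero, mul_one]; exact hC2
      · calc ‖A ^ N‖ ≤ ‖A‖ ^ N := norm_pow_le' A h0
          _ ≤ B ^ N := pow_le_pow_left₀ (norm_nonneg _) hA N
          _ = (B / d) ^ N * d ^ N := by rw [← mul_pow, div_mul_cancel₀ B hd.ne']
          _ ≤ (B / d) ^ k * d ^ N := by
              apply mul_le_mul_of_nonneg_right (pow_le_pow_right₀ hBd h.le)
              positivity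
          _ ≤ C * d ^ N := by
              apply mul_le_mul_of_nonneg_right hC1
              positivity

/-- If `Q : ℝ → Matrix (Fin m) (Fin m) ℝ` is continuous in a neighborhood of `t = 1`
and `Q 1` is nilpotent, then for every `d > 0` there are `ε > 0` and `C > 0` such
that `‖(Q t)^N‖ ≤ C * d^N` for all `t` with `|t - 1| < ε` and all `N`. -/
theorem norm_pow_le_of_nilpotent_at_one
    {m : ℕ} (Q : ℝ → Matrix (Fin m) (Fin m) ℝ)
    (hcont : ∃ U ∈ nhds (1 : ℝ), ContinuousOn Q U)
    (hnil : ∃ N : ℕ, (Q 1) ^ N = 0) :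
    ∀ d : ℝ, 0 < d → ∃ ε : ℝ, 0 < ε ∧ ∃ C : ℝ, 0 < C ∧
      ∀ t : ℝ, |t - 1| < ε → ∀ N : ℕ, ‖(Q t) ^ N‖ ≤ C * d ^ N := by
  obtain ⟨U, hU, hQ⟩ := hcont
  have hQ1 : ContinuousAt Q 1 := hQ.continuousAt hU
  obtain ⟨N0, hN0⟩ := hnil
  set k := N0 + 1 with hkdef
  have hkpos : 0 < k := Nat.succ_pos _
  have hQk : (Q 1) ^ k = 0 := by rw [hkdef, pow_succ, hN0, zero_mul]
  intro d hd
  set B : ℝ := max (‖Q 1‖ + 1) d with hBdef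
  have hdB : d ≤ B := le_max_right _ _
  set C : ℝ := max ((B / d) ^ k) (‖(1 : Matrix (Fin m) (Fin m) ℝ)‖ + 1) with hCdef
  have hCpos : 0 < C := lt_of_lt_of_le (by positivity) (le_max_right _ _)
  -- eventually bounds near 1
  have h1 : ∀ᶠ t in nhds (1 : ℝ), ‖(Q t) ^ k‖ < d ^ k := by
    have hc : ContinuousAt (fun t => ‖(Q t) ^ k‖) 1 := (hQ1.pow k).norm
    have : ‖(Q 1) ^ k‖ < d ^ k := by rw [hQk, norm_zero]; positivity
    exact hc.eventually_lt continuousAt_const this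
  have h2 : ∀ᶠ t in nhds (1 : ℝ), ‖Q t‖ < ‖Q 1‖ + 1 :=
    hQ1.norm.eventually_lt continuousAt_const (lt_add_one _)
  obtain ⟨ε, hε, hball⟩ := Metric.eventually_nhds_iff_ball.mp (h1.and h2)
  refine ⟨ε, hε, C, hCpos, fun t ht N => ?_⟩
  have htball : t ∈ Metric.ball (1 : ℝ) ε := by
    simpa [Metric.mem_ball, Real.dist_eq] using ht
  obtain ⟨hbk, hbt⟩ := hball t htball
  exact aux_pow_bound hkpos hd hdB (le_trans hbt.le (le_max_left _ _)) hbk.le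
    (le_max_left _ _) (by linarith [le_max_right ((B / d) ^ k) (‖(1 : Matrix (Fin m) (Fin m) ℝ)‖ + 1)]) N
end

section
/- Let A be an m×m matrix over a commutative ring. Then ∑_{S ⊆ Fin m} (−1)^{S.card} · det A[S,S] = det (1 − A), where the sum ranges over all finsets S of Fin m. (Equivalently, the supertrace of the action of A on the full exterior algebra, ∑_k (−1)^k · trace(Λ^k A), equals det(1−A).) -/
open Matrix

private lemma piecewise_det {R : Type*} [CommRing R] {m : ℕ}
    (A : Matrix (Fin m) (Fin m) R) (S : Finset (Fin m)) :
    (Matrix.detRowAlternating (S.piecewise (fun i => (-A) i) (fun i => (1 : Matrix (Fin m) (Fin m) R) i)))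
      = (-1 : R) ^ S.card * fminor A S S := by
  classical
  set M : Matrix (Fin m) (Fin m) R :=
    Matrix.of (S.piecewise (fun i => (-A) i) (fun i => (1 : Matrix (Fin m) (Fin m) R) i)) with hM
  have hdet : Matrix.detRowAlternating
      (S.piecewise (fun i => (-A) i) (fun i => (1 : Matrix (Fin m) (Fin m) R) i)) = M.det := rfl
  rw [hdet]
  -- build the equivalence Fin S.card ⊕ Fin Sᶜ.card ≃ Fin m
  have hcompl : Sᶜ.card = Sᶜ.card := rfl
  let e₁ : Fin S.card ↪o Fin m := S.orderEmbOfFin rfl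
  let e₂ : Fin Sᶜ.card ↪o Fin m := Sᶜ.orderEmbOfFin rfl
  have he₁ : ∀ i, e₁ i ∈ S := fun i => S.orderEmbOfFin_mem rfl i
  have he₂ : ∀ i, e₂ i ∉ S := fun i =>
    Finset.mem_compl.mp (Sᶜ.orderEmbOfFin_mem rfl i)
  let f : Fin S.card ⊕ Fin Sᶜ.card → Fin m := Sum.elim e₁ e₂
  have hfbij : Function.Bijective f := by
    constructor
    · rintro (a | a) (b | b) hab
      · simp only [f, Sum.elim_inl] at hab
        exact congrArg Sum.inl (e₁.injective hab)
      · simp only [f, Sum.elim_inl, Sum.elim_inr] at hab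
        exact absurd (hab ▸ he₁ a) (he₂ b)
      · simp only [f, Sum.elim_inl, Sum.elim_inr] at hab
        exact absurd (hab.symm ▸ he₁ b) (he₂ a)
      · simp only [f, Sum.elim_inr] at hab
        exact congrArg Sum.inr (e₂.injective hab)
    · intro x
      by_cases hx : x ∈ S
      · obtain ⟨i, hi⟩ : ∃ i, e₁ i = x := by
          have : x ∈ Set.range e₁ := by
            rw [Finset.range_orderEmbOfFin]; exact hx
          exact this
        exact ⟨Sum.inl i, hi⟩
      · obtain ⟨i, hi⟩ : ∃ i, e₂ i = x := by
          have : x ∈ Set.range e₂ := by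
            rw [Finset.range_orderEmbOfFin]; simpa using hx
          exact this
        exact ⟨Sum.inr i, hi⟩
  let e : Fin S.card ⊕ Fin Sᶜ.card ≃ Fin m := Equiv.ofBijective f hfbij
  rw [← Matrix.det_submatrix_equiv_self e M]
  have hsub : M.submatrix e e =
      Matrix.fromBlocks
        (Matrix.of fun i j : Fin S.card => -(A (e₁ i) (e₁ j)))
        (Matrix.of fun (i : Fin S.card) (j : Fin Sᶜ.card) => -(A (e₁ i) (e₂ j)))
        0 1 := by
    ext i j
    rcases i with i | i <;> rcases j with j | j
    · simp only [Matrix.submatrix_apply, Matrix.fromBlocks_apply₁₁, Matrix.of_apply]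
      show M (e₁ i) (e₁ j) = _
      simp [M, Finset.piecewise_eq_of_mem _ _ _ (he₁ i)]
    · simp only [Matrix.submatrix_apply, Matrix.fromBlocks_apply₁₂, Matrix.of_apply]
      show M (e₁ i) (e₂ j) = _
      simp [M, Finset.piecewise_eq_of_mem _ _ _ (he₁ i)]
    · simp only [Matrix.submatrix_apply, Matrix.fromBlocks_apply₂₁]
      show M (e₂ i) (e₁ j) = _
      have : M (e₂ i) (e₁ j) = (1 : Matrix (Fin m) (Fin m) R) (e₂ i) (e₁ j) := by
        simp [M, Finset.piecewise_eq_of_notMem _ _ _ (he₂ i)]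
      rw [this, Matrix.one_apply_ne, Matrix.zero_apply]
      intro h; exact he₂ i (h ▸ he₁ j)
    · simp only [Matrix.submatrix_apply, Matrix.fromBlocks_apply₂₂]
      show M (e₂ i) (e₂ j) = _
      have : M (e₂ i) (e₂ j) = (1 : Matrix (Fin m) (Fin m) R) (e₂ i) (e₂ j) := by
        simp [M, Finset.piecewise_eq_of_notMem _ _ _ (he₂ i)]
      rw [this]
      by_cases hij : i = j
      · subst hij; simp
      · rw [Matrix.one_apply_ne, Matrix.one_apply_ne hij]
        exact fun h => hij (e₂.injective h)
  rw [hsub, Matrix.det_fromBlocks_zero₂₁, Matrix.det_one, mul_one]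
  have : (Matrix.of fun i j : Fin S.card => -(A (e₁ i) (e₁ j)))
      = -(Matrix.of fun i j : Fin S.card => A (e₁ i) (e₁ j)) := by
    ext i j; simp
  rw [this, Matrix.det_neg, Fintype.card_fin, fminor, dif_pos rfl]

/-- The alternating sum over all subsets `S` of the principal minors of `A` equals
`det (1 - A)`: the supertrace of the exterior algebra action of `A` is `det (1 - A)`. -/
theorem alt_sum_principal_minors_eq_det_one_sub
    {R : Type*} [CommRing R] {m : ℕ} (A : Matrix (Fin m) (Fin m) R) :
    ∑ S : Finset (Fin m), (-1 : R) ^ S.card * fminor A S S = (1 - A).det := by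
  classical
  have h : (1 - A).det = Matrix.detRowAlternating
      ((fun i => (-A) i) + (fun i => (1 : Matrix (Fin m) (Fin m) R) i)) := by
    congr 1
    ext i j
    simp [Matrix.sub_apply, sub_eq_neg_add]
  have h2 := (Matrix.detRowAlternating (R := R) (n := Fin m)).toMultilinearMap.map_add_univ
    (fun i => (-A) i) (fun i => (1 : Matrix (Fin m) (Fin m) R) i)
  rw [h]
  erw [h2]
  exact Finset.sum_congr rfl fun S _ => (piecewise_det A S).symm
end

section
/- Let K be a field and suppose an (n+m)×(n+m) matrix A over K has the form A = 1 − (Matrix.fromBlocks 1 G 0 1) · (Matrix.fromBlocks D 0 K' L), where D is n×n, L is m×m and invertible, G is n×m and K' is m×n. Then for every k and all finsets S, T ⊆ Fin n with S.card = T.card = k, one has ∑_{W ⊆ Fin m} (−1)^{W.card} · det A[Ŝ ∪ Ŵ, T̂ ∪ Ŵ] = det L · det (1−D)[S,T]. -/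
open Matrix Finset

lemma mem_of_orderEmbOfFin_compl {m : ℕ} (W : Finset (Fin m)) (a : Fin Wᶜ.card) :
    Wᶜ.orderEmbOfFin rfl a ∉ W :=
  Finset.mem_compl.mp (Wᶜ.orderEmbOfFin_mem rfl a)

noncomputable def splitEquiv {m : ℕ} (W : Finset (Fin m)) :
    Fin W.card ⊕ Fin Wᶜ.card ≃ Fin m :=
  Equiv.ofBijective (Sum.elim (W.orderEmbOfFin rfl) (Wᶜ.orderEmbOfFin rfl)) (by
    constructor
    · rintro (a | a) (b | b) h <;> simp only [Sum.elim_inl, Sum.elim_inr] at h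
      · exact congrArg Sum.inl ((W.orderEmbOfFin rfl).injective h)
      · exact absurd (h ▸ W.orderEmbOfFin_mem rfl a) (mem_of_orderEmbOfFin_compl W b)
      · exact absurd (h.symm ▸ W.orderEmbOfFin_mem rfl b) (mem_of_orderEmbOfFin_compl W a)
      · exact congrArg Sum.inr ((Wᶜ.orderEmbOfFin rfl).injective h)
    · intro x
      by_cases hx : x ∈ W
      · obtain ⟨a, ha⟩ := Set.mem_range.mp
          ((Finset.range_orderEmbOfFin W rfl).symm ▸ (Finset.mem_coe.mpr hx))
        exact ⟨Sum.inl a, ha⟩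
      · obtain ⟨a, ha⟩ := Set.mem_range.mp
          ((Finset.range_orderEmbOfFin Wᶜ rfl).symm ▸ (Finset.mem_coe.mpr (Finset.mem_compl.mpr hx)))
        exact ⟨Sum.inr a, ha⟩)

@[simp] lemma splitEquiv_inl {m : ℕ} (W : Finset (Fin m)) (a : Fin W.card) :
    splitEquiv W (Sum.inl a) = W.orderEmbOfFin rfl a := rfl

@[simp] lemma splitEquiv_inr {m : ℕ} (W : Finset (Fin m)) (a : Fin Wᶜ.card) :
    splitEquiv W (Sum.inr a) = Wᶜ.orderEmbOfFin rfl a := rfl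

lemma det_piecewise {R : Type*} [CommRing R] {k m : ℕ}
    (M11 : Matrix (Fin k) (Fin k) R) (M12 : Matrix (Fin k) (Fin m) R)
    (M21 : Matrix (Fin m) (Fin k) R) (M22 : Matrix (Fin m) (Fin m) R)
    (W : Finset (Fin m)) :
    (Matrix.of (((univ : Finset (Fin k)).disjSum W).piecewise
        (Matrix.fromBlocks M11 (-M12) M21 (-M22))
        (Matrix.fromBlocks 0 0 0 1))).det
    = (-1 : R) ^ W.card *
      (Matrix.fromBlocks M11 (M12.submatrix id (W.orderEmbOfFin rfl))
        (M21.submatrix (W.orderEmbOfFin rfl) id)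
        (M22.submatrix (W.orderEmbOfFin rfl) (W.orderEmbOfFin rfl))).det := by
  set oW := ⇑(W.orderEmbOfFin rfl) with hoW
  set oV := ⇑(Wᶜ.orderEmbOfFin rfl) with hoV
  set X := Matrix.fromBlocks M11 (-M12) M21 (-M22) with hX
  set Y : Matrix (Fin k ⊕ Fin m) (Fin k ⊕ Fin m) R := Matrix.fromBlocks 0 0 0 1 with hY
  set P := Matrix.of (((univ : Finset (Fin k)).disjSum W).piecewise X Y) with hP
  set E : (Fin k ⊕ Fin W.card) ⊕ Fin Wᶜ.card ≃ Fin k ⊕ Fin m :=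
    (Equiv.sumAssoc _ _ _).trans (Equiv.sumCongr (Equiv.refl _) (splitEquiv W)) with hE
  have hne : ∀ x y, oV x ≠ oW y := by
    intro x y h
    have hy := W.orderEmbOfFin_mem rfl y
    rw [← hoW, ← h, hoV] at hy
    exact mem_of_orderEmbOfFin_compl W x hy
  have hEval : ∀ p : (Fin k ⊕ Fin W.card) ⊕ Fin Wᶜ.card,
      E p = Sum.elim (Sum.elim Sum.inl (fun a => Sum.inr (oW a))) (fun b => Sum.inr (oV b)) p := by
    rintro ((i | a) | b) <;> rfl
  have hrow1 : ∀ (i : Fin k) y, P (Sum.inl i) y = X (Sum.inl i) y := by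
    intro i y; simp [hP, Finset.piecewise]
  have hrow2 : ∀ (a : Fin W.card) y, P (Sum.inr (oW a)) y = X (Sum.inr (oW a)) y := by
    intro a y; simp [hP, Finset.piecewise, hoW, W.orderEmbOfFin_mem rfl a]
  have hrow3 : ∀ (b : Fin Wᶜ.card) y, P (Sum.inr (oV b)) y = Y (Sum.inr (oV b)) y := by
    intro b y; simp [hP, Finset.piecewise, hoV, mem_of_orderEmbOfFin_compl W b]
  have h1 : P.submatrix E E = Matrix.fromBlocks
      (Matrix.fromBlocks M11 (-(M12.submatrix id oW)) (M21.submatrix oW id)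
        (-(M22.submatrix oW oW)))
      (P.submatrix (fun p => E (Sum.inl p)) (fun b => E (Sum.inr b))) 0 1 := by
    ext i j
    obtain (i | a) | b := i <;> obtain (j | c) | d := j <;>
      simp only [Matrix.submatrix_apply, hEval, Sum.elim_inl, Sum.elim_inr,
        Matrix.fromBlocks_apply₁₁, Matrix.fromBlocks_apply₁₂, Matrix.fromBlocks_apply₂₁,
        Matrix.fromBlocks_apply₂₂]
    case inl.inl.inl.inl => rw [hrow1]; simp [hX]
    case inl.inl.inl.inr => rw [hrow1]; simp [hX]
    case inl.inr.inl.inl => rw [hrow2]; simp [hX]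
    case inl.inr.inl.inr => rw [hrow2]; simp [hX]
    case inr.inl.inl => rw [hrow3]; simp [hY]
    case inr.inl.inr =>
      rw [hrow3]
      simp only [hY, Matrix.fromBlocks_apply₂₂]
      rw [Matrix.one_apply_ne (hne b c)]
      simp
    case inr.inr =>
      rw [hrow3]
      simp only [hY, Matrix.fromBlocks_apply₂₂]
      by_cases hbd : b = d
      · subst hbd; simp
      · rw [Matrix.one_apply_ne fun h => hbd ((Wᶜ.orderEmbOfFin rfl).injective h),
          Matrix.one_apply_ne hbd]
  have h2 : (Matrix.fromBlocks M11 (-(M12.submatrix id oW)) (M21.submatrix oW id)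
        (-(M22.submatrix oW oW)))
      = Matrix.fromBlocks M11 (M12.submatrix id oW) (M21.submatrix oW id)
          (M22.submatrix oW oW) * Matrix.fromBlocks 1 0 0 (-1) := by
    rw [Matrix.fromBlocks_multiply]
    simp
  calc P.det = (P.submatrix E E).det := (Matrix.det_submatrix_equiv_self E P).symm
    _ = _ := by
        rw [h1, Matrix.det_fromBlocks_zero₂₁, Matrix.det_one, mul_one, h2, Matrix.det_mul,
          Matrix.det_fromBlocks_zero₂₁, Matrix.det_one, one_mul, Matrix.det_neg,
          Matrix.det_one, mul_one, Fintype.card_fin, mul_comm]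

lemma alt_sum_blocks {R : Type*} [CommRing R] {k m : ℕ}
    (M11 : Matrix (Fin k) (Fin k) R) (M12 : Matrix (Fin k) (Fin m) R)
    (M21 : Matrix (Fin m) (Fin k) R) (M22 : Matrix (Fin m) (Fin m) R) :
    ∑ W : Finset (Fin m), (-1 : R) ^ W.card *
      (Matrix.fromBlocks M11 (M12.submatrix id (W.orderEmbOfFin rfl))
        (M21.submatrix (W.orderEmbOfFin rfl) id)
        (M22.submatrix (W.orderEmbOfFin rfl) (W.orderEmbOfFin rfl))).det
    = (Matrix.fromBlocks M11 (-M12) M21 (1 - M22)).det := by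
  set X := Matrix.fromBlocks M11 (-M12) M21 (-M22) with hX
  set Y : Matrix (Fin k ⊕ Fin m) (Fin k ⊕ Fin m) R := Matrix.fromBlocks 0 0 0 1 with hY
  have hsplit : Matrix.fromBlocks M11 (-M12) M21 (1 - M22) = X + Y := by
    ext i j
    rcases i with i | i <;> rcases j with j | j <;>
      simp [hX, hY, Matrix.fromBlocks, sub_eq_neg_add, add_comm]
  have hdet : (X + Y).det = ∑ s : Finset (Fin k ⊕ Fin m), (Matrix.of (s.piecewise X Y)).det := by
    have := (Matrix.detRowAlternating :
      AlternatingMap R (Fin k ⊕ Fin m → R) R (Fin k ⊕ Fin m)).toMultilinearMap.map_add_univ X Y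
    exact this
  have hbij : Function.Bijective
      (fun p : Finset (Fin k) × Finset (Fin m) => p.1.disjSum p.2) := by
    constructor
    · intro p q h
      obtain ⟨h1, h2⟩ := (Finset.disjSum_inj).mp h
      exact Prod.ext h1 h2
    · intro u
      exact ⟨(u.toLeft, u.toRight), u.toLeft_disjSum_toRight⟩
  have hsum : ∑ s : Finset (Fin k ⊕ Fin m), (Matrix.of (s.piecewise X Y)).det
      = ∑ p : Finset (Fin k) × Finset (Fin m),
          (Matrix.of ((p.1.disjSum p.2).piecewise X Y)).det :=
    (Fintype.sum_bijective _ hbij _ _ (fun p => rfl)).symm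
  rw [hsplit, hdet, hsum, Fintype.sum_prod_type]
  rw [Finset.sum_eq_single_of_mem (univ : Finset (Fin k)) (Finset.mem_univ _) ?vanish]
  case vanish =>
    intro U _ hU
    obtain ⟨i, hi⟩ := by simpa using (Finset.eq_univ_iff_forall.not.mp hU)
    refine Finset.sum_eq_zero fun W _ => ?_
    refine Matrix.det_eq_zero_of_row_eq_zero (Sum.inl i) fun j => ?_
    have hnotmem : Sum.inl i ∉ U.disjSum W := by simp [hi]
    erw [Matrix.of_apply, Finset.piecewise_eq_of_notMem _ _ _ hnotmem, hY]
    rcases j with j | j <;> simp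
  exact (Finset.sum_congr rfl fun W _ => det_piecewise M11 M12 M21 M22 W).symm

lemma inlL_injective {n m : ℕ} : Function.Injective (inlL (n := n) (m := m)) :=
  fun a b h => Sum.inl_injective (toLex.injective h)

lemma inrL_injective {n m : ℕ} : Function.Injective (inrL (n := n) (m := m)) :=
  fun a b h => Sum.inr_injective (toLex.injective h)

lemma disjoint_inlL_inrL {n m : ℕ} (S : Finset (Fin n)) (W : Finset (Fin m)) :
    Disjoint (S.image (inlL (m := m))) (W.image inrL) := by
  rw [Finset.disjoint_left]
  rintro x hx hx'
  obtain ⟨a, _, rfl⟩ := Finset.mem_image.mp hx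
  obtain ⟨b, _, hb⟩ := Finset.mem_image.mp hx'
  exact Sum.inl_ne_inr (toLex.injective hb.symm)

lemma card_union_inlL_inrL {n m : ℕ} (S : Finset (Fin n)) (W : Finset (Fin m)) :
    (S.image (inlL (m := m)) ∪ W.image inrL).card = S.card + W.card := by
  rw [Finset.card_union_of_disjoint (disjoint_inlL_inrL S W),
    Finset.card_image_of_injective _ inlL_injective,
    Finset.card_image_of_injective _ inrL_injective]

lemma strictMono_sumElim_lex {a b n m : ℕ} {f : Fin a → Fin n} {g : Fin b → Fin m}
    (hf : StrictMono f) (hg : StrictMono g) :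
    StrictMono (fun i : Fin (a + b) =>
      Sum.elim (inlL (m := m) ∘ f) (inrL (n := n) ∘ g) (finSumFinEquiv.symm i)) := by
  intro i j hij
  have hij' : (i : ℕ) < (j : ℕ) := hij
  rcases lt_or_ge (i : ℕ) a with hi | hi <;> rcases lt_or_ge (j : ℕ) a with hj | hj
  · have h1 : finSumFinEquiv.symm i = Sum.inl ⟨i, hi⟩ := by
      rw [Equiv.symm_apply_eq, finSumFinEquiv_apply_left]; exact Fin.ext rfl
    have h2 : finSumFinEquiv.symm j = Sum.inl ⟨j, hj⟩ := by
      rw [Equiv.symm_apply_eq, finSumFinEquiv_apply_left]; exact Fin.ext rfl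
    simp only [h1, h2, Sum.elim_inl, Function.comp_apply]
    exact Sum.Lex.inl_lt_inl_iff.mpr (hf hij')
  · have h1 : finSumFinEquiv.symm i = Sum.inl ⟨i, hi⟩ := by
      rw [Equiv.symm_apply_eq, finSumFinEquiv_apply_left]; exact Fin.ext rfl
    have h2 : finSumFinEquiv.symm j = Sum.inr ⟨j - a, by omega⟩ := by
      rw [Equiv.symm_apply_eq, finSumFinEquiv_apply_right]; exact Fin.ext (by simp; omega)
    simp only [h1, h2, Sum.elim_inl, Sum.elim_inr, Function.comp_apply]
    exact Sum.Lex.inl_lt_inr _ _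
  · omega
  · have h1 : finSumFinEquiv.symm i = Sum.inr ⟨i - a, by omega⟩ := by
      rw [Equiv.symm_apply_eq, finSumFinEquiv_apply_right]; exact Fin.ext (by simp; omega)
    have h2 : finSumFinEquiv.symm j = Sum.inr ⟨j - a, by omega⟩ := by
      rw [Equiv.symm_apply_eq, finSumFinEquiv_apply_right]; exact Fin.ext (by simp; omega)
    simp only [h1, h2, Sum.elim_inr, Function.comp_apply]
    exact Sum.Lex.inr_lt_inr_iff.mpr (hg (by simp only [Fin.mk_lt_mk]; omega))

lemma fminor_toLexMat {R : Type*} [CommRing R] {n m : ℕ}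
    (A : Matrix (Fin n ⊕ Fin m) (Fin n ⊕ Fin m) R)
    (S T : Finset (Fin n)) (W : Finset (Fin m)) (hST : S.card = T.card) :
    fminor (toLexMat A) (S.image inlL ∪ W.image inrL) (T.image inlL ∪ W.image inrL)
    = (A.submatrix
        (Sum.map (S.orderEmbOfFin hST) (W.orderEmbOfFin rfl))
        (Sum.map (T.orderEmbOfFin rfl) (W.orderEmbOfFin rfl))).det := by
  have hcS : (S.image (inlL (m := m)) ∪ W.image inrL).card = T.card + W.card := by
    rw [card_union_inlL_inrL, hST]
  have hcT : (T.image (inlL (m := m)) ∪ W.image inrL).card = T.card + W.card :=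
    card_union_inlL_inrL T W
  have hc : (S.image (inlL (m := m)) ∪ W.image inrL).card
      = (T.image (inlL (m := m)) ∪ W.image inrL).card := by rw [hcS, hcT]
  rw [fminor, dif_pos hc]
  set eS : Fin (T.image (inlL (m := m)) ∪ W.image inrL).card ≃ Fin T.card ⊕ Fin W.card :=
    (finCongr hcT).trans finSumFinEquiv.symm with heS
  set fS := ⇑(S.orderEmbOfFin hST) with hfS
  set fT := ⇑(T.orderEmbOfFin (rfl : T.card = T.card)) with hfT
  set fW := ⇑(W.orderEmbOfFin (rfl : W.card = W.card)) with hfW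
  have hrow : (fun i => Sum.elim (inlL ∘ fS) (inrL ∘ fW)
        (finSumFinEquiv.symm (finCongr hcT i)))
      = ⇑((S.image (inlL (m := m)) ∪ W.image inrL).orderEmbOfFin hc) := by
    refine Finset.orderEmbOfFin_unique hc (fun x => ?_) ?_
    · rcases finSumFinEquiv.symm (finCongr hcT x) with p | p
      · exact Finset.mem_union_left _
          (Finset.mem_image_of_mem _ (S.orderEmbOfFin_mem hST p))
      · exact Finset.mem_union_right _
          (Finset.mem_image_of_mem _ (W.orderEmbOfFin_mem rfl p))
    · exact (strictMono_sumElim_lex (S.orderEmbOfFin hST).strictMono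
        (W.orderEmbOfFin rfl).strictMono).comp fun _ _ h => h
  have hcol : (fun i => Sum.elim (inlL ∘ fT) (inrL ∘ fW)
        (finSumFinEquiv.symm (finCongr hcT i)))
      = ⇑((T.image (inlL (m := m)) ∪ W.image inrL).orderEmbOfFin rfl) := by
    refine Finset.orderEmbOfFin_unique rfl (fun x => ?_) ?_
    · rcases finSumFinEquiv.symm (finCongr hcT x) with p | p
      · exact Finset.mem_union_left _
          (Finset.mem_image_of_mem _ (T.orderEmbOfFin_mem rfl p))
      · exact Finset.mem_union_right _
          (Finset.mem_image_of_mem _ (W.orderEmbOfFin_mem rfl p))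
    · exact (strictMono_sumElim_lex (T.orderEmbOfFin rfl).strictMono
        (W.orderEmbOfFin rfl).strictMono).comp fun _ _ h => h
  rw [← hrow, ← hcol]
  have hmat : (Matrix.of fun i j : Fin (T.image (inlL (m := m)) ∪ W.image inrL).card =>
      toLexMat A (Sum.elim (inlL ∘ fS) (inrL ∘ fW) (finSumFinEquiv.symm (finCongr hcT i)))
        (Sum.elim (inlL ∘ fT) (inrL ∘ fW) (finSumFinEquiv.symm (finCongr hcT j))))
      = (A.submatrix (Sum.map fS fW) (Sum.map fT fW)).submatrix eS eS := by
    ext i j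
    simp only [Matrix.of_apply, Matrix.submatrix_apply, heS, Equiv.trans_apply]
    rcases finSumFinEquiv.symm (finCongr hcT i) with p | p <;>
      rcases finSumFinEquiv.symm (finCongr hcT j) with q | q <;> rfl
  rw [hmat, Matrix.det_submatrix_equiv_self]

lemma fromBlocks_submatrix_sum_map {α a b c d a' b' c' d' : Type*}
    (P : Matrix a b α) (Q : Matrix a d α) (Rm : Matrix c b α) (U : Matrix c d α)
    (f : a' → a) (g : c' → c) (f' : b' → b) (g' : d' → d) :
    (Matrix.fromBlocks P Q Rm U).submatrix (Sum.map f g) (Sum.map f' g')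
    = Matrix.fromBlocks (P.submatrix f f') (Q.submatrix f g')
        (Rm.submatrix g f') (U.submatrix g g') := by
  ext (i | i) (j | j) <;> rfl

/-- If `A = 1 - (fromBlocks 1 G 0 1) * (fromBlocks D 0 K' L)` with `L` invertible,
then the alternating sum over subsets `W` of the right block of the minors of `A` on
rows `Ŝ ∪ Ŵ` and columns `T̂ ∪ Ŵ` equals `det L` times the minor of `1 - D`. -/
theorem alt_sum_minors_of_UL_factorization
    {K : Type*} [Field K] {n m : ℕ}
    (A : Matrix (Fin n ⊕ Fin m) (Fin n ⊕ Fin m) K)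
    (D : Matrix (Fin n) (Fin n) K) (G : Matrix (Fin n) (Fin m) K)
    (K' : Matrix (Fin m) (Fin n) K) (L : Matrix (Fin m) (Fin m) K)
    (hL : IsUnit L.det)
    (hA : A = 1 - Matrix.fromBlocks 1 G 0 1 * Matrix.fromBlocks D 0 K' L)
    (k : ℕ) (S T : Finset (Fin n)) (hS : S.card = k) (hT : T.card = k) :
    ∑ W : Finset (Fin m), (-1 : K) ^ W.card *
        fminor (toLexMat A) (S.image inlL ∪ W.image inrL)
          (T.image inlL ∪ W.image inrL)
      = L.det * fminor (1 - D) S T := by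
  have hST : S.card = T.card := hS.trans hT.symm
  set fS := ⇑(S.orderEmbOfFin hST) with hfS
  set fT := ⇑(T.orderEmbOfFin (rfl : T.card = T.card)) with hfT
  haveI : Invertible L := Matrix.invertibleOfIsUnitDet L hL
  set A11 : Matrix (Fin n) (Fin n) K := 1 - (D + G * K') with hA11
  set A12 : Matrix (Fin n) (Fin m) K := -(G * L) with hA12
  set A21 : Matrix (Fin m) (Fin n) K := -K' with hA21
  set A22 : Matrix (Fin m) (Fin m) K := 1 - L with hA22
  have hAblocks : A = Matrix.fromBlocks A11 A12 A21 A22 := by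
    rw [hA, Matrix.fromBlocks_multiply]
    ext (i | i) (j | j) <;>
      simp [hA11, hA12, hA21, hA22, Matrix.one_apply, Matrix.sub_apply, sub_eq_add_neg]
  set M11 : Matrix (Fin T.card) (Fin T.card) K := A11.submatrix fS fT with hM11
  set M12 : Matrix (Fin T.card) (Fin m) K := A12.submatrix fS id with hM12
  set M21 : Matrix (Fin m) (Fin T.card) K := A21.submatrix id fT with hM21
  have step1 : ∀ W : Finset (Fin m),
      fminor (toLexMat A) (S.image inlL ∪ W.image inrL) (T.image inlL ∪ W.image inrL)
      = (Matrix.fromBlocks M11 (M12.submatrix id (W.orderEmbOfFin rfl))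
          (M21.submatrix (W.orderEmbOfFin rfl) id)
          (A22.submatrix (W.orderEmbOfFin rfl) (W.orderEmbOfFin rfl))).det := by
    intro W
    rw [fminor_toLexMat A S T W hST, hAblocks, fromBlocks_submatrix_sum_map]
    simp only [hM11, hM12, hM21, Matrix.submatrix_submatrix, Function.comp_id,
      Function.id_comp, hfS, hfT]
  calc ∑ W : Finset (Fin m), (-1 : K) ^ W.card *
        fminor (toLexMat A) (S.image inlL ∪ W.image inrL) (T.image inlL ∪ W.image inrL)
      = ∑ W : Finset (Fin m), (-1 : K) ^ W.card *
          (Matrix.fromBlocks M11 (M12.submatrix id (W.orderEmbOfFin rfl))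
            (M21.submatrix (W.orderEmbOfFin rfl) id)
            (A22.submatrix (W.orderEmbOfFin rfl) (W.orderEmbOfFin rfl))).det :=
        Finset.sum_congr rfl fun W _ => by rw [step1 W]
    _ = (Matrix.fromBlocks M11 (-M12) M21 (1 - A22)).det := alt_sum_blocks M11 M12 M21 A22
    _ = L.det * fminor (1 - D) S T := by
        have hL' : (1 : Matrix (Fin m) (Fin m) K) - A22 = L := by
          rw [hA22, sub_sub_cancel]
        have hnegM12 : -M12 = (G * L).submatrix fS id := by
          rw [hM12, hA12]; ext i j; simp
        rw [hL', hnegM12, Matrix.det_fromBlocks₂₂]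
        congr 1
        have e1 : (G * L).submatrix fS id * ⅟L = ((G * L) * ⅟L).submatrix fS id := by
          rw [Matrix.submatrix_mul (G * L) (⅟L) fS id id Function.bijective_id,
            Matrix.submatrix_id_id]
        have e2 : (G * L) * ⅟L = G := by
          rw [Matrix.mul_assoc, mul_invOf_self, Matrix.mul_one]
        have e3 : G.submatrix fS id * M21 = (G * A21).submatrix fS fT := by
          rw [hM21, Matrix.submatrix_mul G A21 fS id fT Function.bijective_id]
        rw [e1, e2, e3]
        have e4 : M11 - (G * A21).submatrix fS fT = (1 - D).submatrix fS fT := by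
          rw [hM11, hA21, hA11]
          ext i j
          simp [Matrix.mul_neg, Matrix.sub_apply]
          ring
        rw [e4, fminor, dif_pos hST]
        rfl
end

section
/- Over the Laurent polynomial ring ℤ[s,s⁻¹], let h = s•diag(1,−1), h' = s⁻¹•diag(1,−1) (so h·h' = 1), e = [[0,1],[0,0]], f = [[0,0],[1,0]], and for n ≥ 1 define the matrices on the n-fold tensor power (indexed by Fin n → Fin 2, with the tensor/Kronecker product of a family of 2×2 matrices having entries the product of the factors' entries): H_n = h^{⊗n}, H'_n = (h')^{⊗n}, E_n = ∑_{i=1}^n 1^{⊗(i−1)} ⊗ e ⊗ (h')^{⊗(n−i)}, and F_n = ∑_{i=1}^n h^{⊗(i−1)} ⊗ f ⊗ 1^{⊗(n−i)}. Then: (i) H_n · E_n = − E_n · H_n; (ii) H_n · F_n = − F_n · H_n; and (iii) (s − s⁻¹) • (E_n·F_n − F_n·E_n) = H_n − H'_n. -/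
open Matrix

/-- The Laurent polynomial `s` in `ℤ[s,s⁻¹]` (`s` plays the role of `t^{1/2}`). -/
noncomputable def sL : LaurentPolynomial ℤ := LaurentPolynomial.T 1

/-- The Laurent polynomial `s⁻¹` in `ℤ[s,s⁻¹]`. -/
noncomputable def sLinv : LaurentPolynomial ℤ := LaurentPolynomial.T (-1)

/-- `h = s • diag(1,-1)`. -/
noncomputable def hmat : Matrix (Fin 2) (Fin 2) (LaurentPolynomial ℤ) :=
  sL • Matrix.diagonal ![1, -1]

/-- `h' = s⁻¹ • diag(1,-1)`, so that `h * h' = 1`. -/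
noncomputable def hmat' : Matrix (Fin 2) (Fin 2) (LaurentPolynomial ℤ) :=
  sLinv • Matrix.diagonal ![1, -1]

/-- `e = [[0,1],[0,0]]`. -/
noncomputable def emat : Matrix (Fin 2) (Fin 2) (LaurentPolynomial ℤ) :=
  !![0, 1; 0, 0]

/-- `f = [[0,0],[1,0]]`. -/
noncomputable def fmat : Matrix (Fin 2) (Fin 2) (LaurentPolynomial ℤ) :=
  !![0, 0; 1, 0]

/-- The `n`-fold Kronecker (tensor) product of a family of `2 × 2` matrices:
the matrix indexed by `Fin n → Fin 2` whose `(φ,ψ)` entry is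
`∏ j, (M j) (φ j) (ψ j)`. -/
noncomputable def tensorPow {n : ℕ}
    (M : Fin n → Matrix (Fin 2) (Fin 2) (LaurentPolynomial ℤ)) :
    Matrix (Fin n → Fin 2) (Fin n → Fin 2) (LaurentPolynomial ℤ) :=
  fun φ ψ => ∏ j, M j (φ j) (ψ j)

/-- `H_n = h^{⊗n}`. -/
noncomputable def Hn (n : ℕ) := tensorPow (fun _ : Fin n => hmat)

/-- `H'_n = (h')^{⊗n}`. -/
noncomputable def Hn' (n : ℕ) := tensorPow (fun _ : Fin n => hmat')

/-- `E_n = ∑_{i=1}^n 1^{⊗(i-1)} ⊗ e ⊗ (h')^{⊗(n-i)}`. -/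
noncomputable def En (n : ℕ) :=
  ∑ i : Fin n, tensorPow (fun j : Fin n =>
    if j < i then 1 else if j = i then emat else hmat')

/-- `F_n = ∑_{i=1}^n h^{⊗(i-1)} ⊗ f ⊗ 1^{⊗(n-i)}`. -/
noncomputable def Fn (n : ℕ) :=
  ∑ i : Fin n, tensorPow (fun j : Fin n =>
    if j < i then hmat else if j = i then fmat else 1)

/- ==== auxiliary lemmas ==== -/

lemma sL_mul_sLinv : sL * sLinv = 1 := by
  rw [sL, sLinv, ← LaurentPolynomial.T_add]; norm_num

lemma hmat_mul_hmat' : hmat * hmat' = 1 := by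
  rw [hmat, hmat', smul_mul_assoc, mul_smul_comm, smul_smul, sL_mul_sLinv,
    one_smul, Matrix.diagonal_mul_diagonal]
  refine Matrix.ext fun i j => ?_
  fin_cases i <;> fin_cases j <;> simp [Matrix.diagonal_apply, Matrix.one_apply]

lemma hmat'_mul_hmat : hmat' * hmat = 1 := by
  rw [hmat, hmat', smul_mul_assoc, mul_smul_comm, smul_smul, mul_comm sLinv sL,
    sL_mul_sLinv, one_smul, Matrix.diagonal_mul_diagonal]
  refine Matrix.ext fun i j => ?_
  fin_cases i <;> fin_cases j <;> simp [Matrix.diagonal_apply, Matrix.one_apply]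

lemma hmat_comm_hmat' : hmat * hmat' = hmat' * hmat := by
  rw [hmat_mul_hmat', hmat'_mul_hmat]

lemma hmat_eq : hmat = !![sL, 0; 0, -sL] := by
  refine Matrix.ext fun i j => ?_
  fin_cases i <;> fin_cases j <;>
    simp [hmat, Matrix.smul_apply, Matrix.diagonal_apply, smul_eq_mul]

lemma hmat'_eq : hmat' = !![sLinv, 0; 0, -sLinv] := by
  refine Matrix.ext fun i j => ?_
  fin_cases i <;> fin_cases j <;>
    simp [hmat', Matrix.smul_apply, Matrix.diagonal_apply, smul_eq_mul]

lemma he_anti : hmat * emat = -(emat * hmat) := by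
  rw [hmat_eq, emat]
  refine Matrix.ext fun i j => ?_
  fin_cases i <;> fin_cases j <;>
    simp [Matrix.mul_apply, Fin.sum_univ_two] <;> ring

lemma hf_anti : hmat * fmat = -(fmat * hmat) := by
  rw [hmat_eq, fmat]
  refine Matrix.ext fun i j => ?_
  fin_cases i <;> fin_cases j <;>
    simp [Matrix.mul_apply, Fin.sum_univ_two] <;> ring

lemma h'f_anti : hmat' * fmat = -(fmat * hmat') := by
  rw [hmat'_eq, fmat]
  refine Matrix.ext fun i j => ?_
  fin_cases i <;> fin_cases j <;>
    simp [Matrix.mul_apply, Fin.sum_univ_two] <;> ring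

lemma eh_anti : emat * hmat = -(hmat * emat) := by rw [he_anti, neg_neg]

lemma ef_fe : (sL - sLinv) • (emat * fmat - fmat * emat) = hmat - hmat' := by
  refine Matrix.ext fun i j => ?_
  fin_cases i <;> fin_cases j <;>
    simp [hmat, hmat', emat, fmat, Matrix.mul_apply, Fin.sum_univ_two, sub_smul,
      Matrix.smul_apply, smul_eq_mul, Matrix.diagonal_apply, Matrix.sub_apply] <;> ring

lemma tensorPow_congr {n : ℕ} {M N : Fin n → Matrix (Fin 2) (Fin 2) (LaurentPolynomial ℤ)}
    (h : ∀ j, M j = N j) : tensorPow M = tensorPow N := by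
  have : M = N := funext h
  rw [this]

lemma tensorPow_mul {n : ℕ} (M N : Fin n → Matrix (Fin 2) (Fin 2) (LaurentPolynomial ℤ)) :
    tensorPow M * tensorPow N = tensorPow fun j => M j * N j := by
  refine Matrix.ext fun φ ψ => ?_
  simp only [tensorPow, Matrix.mul_apply]
  have key := Finset.prod_univ_sum (fun _ : Fin n => (Finset.univ : Finset (Fin 2)))
      (fun j k => M j (φ j) k * N j k (ψ j))
  rw [Fintype.piFinset_univ] at key
  rw [key]
  exact Finset.sum_congr rfl fun μ _ => (Finset.prod_mul_distrib).symm

lemma tensorPow_neg_single {n : ℕ} (M N : Fin n → Matrix (Fin 2) (Fin 2) (LaurentPolynomial ℤ))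
    (i : Fin n) (h1 : ∀ j, j ≠ i → M j = N j) (h2 : M i = -(N i)) :
    tensorPow M = -(tensorPow N) := by
  refine Matrix.ext fun φ ψ => ?_
  simp only [tensorPow, Matrix.neg_apply]
  rw [Fintype.prod_eq_mul_prod_compl i (fun j => M j (φ j) (ψ j)),
    Fintype.prod_eq_mul_prod_compl i (fun j => N j (φ j) (ψ j))]
  have hP : (∏ j ∈ ({i}ᶜ : Finset (Fin n)), M j (φ j) (ψ j))
      = ∏ j ∈ ({i}ᶜ : Finset (Fin n)), N j (φ j) (ψ j) :=
    Finset.prod_congr rfl fun j hj => by rw [h1 j (by simpa using hj)]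
  rw [hP, h2, Matrix.neg_apply, neg_mul]

lemma tensorPow_neg_two {n : ℕ} (M N : Fin n → Matrix (Fin 2) (Fin 2) (LaurentPolynomial ℤ))
    (i k : Fin n) (hik : i ≠ k)
    (h1 : ∀ j, j ≠ i → j ≠ k → M j = N j)
    (h2 : M i = -(N i)) (h3 : M k = -(N k)) :
    tensorPow M = tensorPow N := by
  set P := Function.update M i (N i) with hP
  have e1 : tensorPow M = -(tensorPow P) := by
    refine tensorPow_neg_single M P i (fun j hj => ?_) ?_
    · rw [hP, Function.update_of_ne hj]
    · rw [hP, Function.update_self, h2]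
  have e2 : tensorPow P = -(tensorPow N) := by
    refine tensorPow_neg_single P N k (fun j hj => ?_) ?_
    · by_cases hji : j = i
      · subst hji; rw [hP, Function.update_self]
      · rw [hP, Function.update_of_ne hji]; exact h1 j hji hj
    · rw [hP, Function.update_of_ne (Ne.symm hik), h3]
  rw [e1, e2, neg_neg]

lemma tensorPow_smul_sub_slot {n : ℕ}
    (M N A B : _) (i : Fin n) (c : LaurentPolynomial ℤ)
    (h1 : ∀ j, j ≠ i → M j = N j) (h2 : c • (M i - N i) = A - B) :
    c • (tensorPow M - tensorPow N)
      = tensorPow (Function.update M i A) - tensorPow (Function.update M i B) := by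
  refine Matrix.ext fun φ ψ => ?_
  simp only [Matrix.smul_apply, Matrix.sub_apply, tensorPow, smul_eq_mul]
  rw [Fintype.prod_eq_mul_prod_compl i (fun j => M j (φ j) (ψ j)),
    Fintype.prod_eq_mul_prod_compl i (fun j => N j (φ j) (ψ j)),
    Fintype.prod_eq_mul_prod_compl i (fun j => Function.update M i A j (φ j) (ψ j)),
    Fintype.prod_eq_mul_prod_compl i (fun j => Function.update M i B j (φ j) (ψ j))]
  have hNM : ∀ j ∈ ({i}ᶜ : Finset (Fin n)), N j (φ j) (ψ j) = M j (φ j) (ψ j) := by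
    intro j hj
    rw [h1 j (by simpa using hj)]
  have hA : ∀ j ∈ ({i}ᶜ : Finset (Fin n)),
      Function.update M i A j (φ j) (ψ j) = M j (φ j) (ψ j) := by
    intro j hj
    rw [Function.update_of_ne (by simpa using hj)]
  have hB : ∀ j ∈ ({i}ᶜ : Finset (Fin n)),
      Function.update M i B j (φ j) (ψ j) = M j (φ j) (ψ j) := by
    intro j hj
    rw [Function.update_of_ne (by simpa using hj)]
  rw [Finset.prod_congr rfl hNM, Finset.prod_congr rfl hA, Finset.prod_congr rfl hB,
    Function.update_self, Function.update_self]
  have key : c * (M i (φ i) (ψ i) - N i (φ i) (ψ i)) = A (φ i) (ψ i) - B (φ i) (ψ i) := by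
    have := congrFun (congrFun h2 (φ i)) (ψ i)
    simpa [Matrix.smul_apply, Matrix.sub_apply, smul_eq_mul] using this
  rw [← sub_mul, ← mul_assoc, key, sub_mul]

/-- telescoping family: `h^{⊗k} ⊗ (h')^{⊗(n-k)}`. -/
noncomputable def Tk (n k : ℕ) :=
  tensorPow (fun j : Fin n => if (j : ℕ) < k then hmat else hmat')

lemma Tk_top (n : ℕ) : Tk n n = Hn n :=
  tensorPow_congr fun j => if_pos j.isLt

lemma Tk_bot (n : ℕ) : Tk n 0 = Hn' n :=
  tensorPow_congr fun j => if_neg (by omega)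

/-- Slot functions of `En`. -/
noncomputable def cE (n : ℕ) (i : Fin n) : Fin n → Matrix (Fin 2) (Fin 2) (LaurentPolynomial ℤ) :=
  fun j => if j < i then 1 else if j = i then emat else hmat'

/-- Slot functions of `Fn`. -/
noncomputable def dF (n : ℕ) (i : Fin n) : Fin n → Matrix (Fin 2) (Fin 2) (LaurentPolynomial ℤ) :=
  fun j => if j < i then hmat else if j = i then fmat else 1

lemma cross {n : ℕ} (i k : Fin n) (hik : i ≠ k) :
    tensorPow (fun j => cE n i j * dF n k j) = tensorPow (fun j => dF n k j * cE n i j) := by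
  have hcomm : ∀ j : Fin n, j ≠ i → j ≠ k → cE n i j * dF n k j = dF n k j * cE n i j := by
    intro j hji hjk
    unfold cE dF
    by_cases h1 : j < i <;> by_cases h2 : j < k <;>
      simp [h1, h2, hji, hjk, hmat_mul_hmat', hmat'_mul_hmat]
  rcases lt_or_gt_of_ne hik with hlt | hgt
  · refine tensorPow_neg_two _ _ i k hik hcomm ?_ ?_
    · unfold cE dF
      simp only [lt_self_iff_false, if_false, if_pos rfl, if_pos hlt]
      exact eh_anti
    · unfold cE dF
      simp only [lt_self_iff_false, if_false, if_pos rfl, if_neg (asymm hlt),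
        if_neg (Ne.symm hik)]
      exact h'f_anti
  · refine tensorPow_congr fun j => ?_
    by_cases hji : j = i
    · subst hji
      unfold cE dF
      simp [lt_self_iff_false, if_neg (not_lt_of_gt hgt), hik, hgt]
    · by_cases hjk : j = k
      · subst hjk
        unfold cE dF
        simp [hgt, lt_self_iff_false, hji]
      · exact hcomm j hji hjk

/-- The `n`-fold coproduct operators of the rescaled generators of
`U_{-1}(sl₂)` satisfy: `H_n` anti-commutes with `E_n` and with `F_n`, and
`(s - s⁻¹) • [E_n, F_n] = H_n - H'_n`. -/
theorem quantum_sl2_coproduct_relations (n : ℕ) (hn : 1 ≤ n) :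
    Hn n * En n = -(En n * Hn n) ∧
    Hn n * Fn n = -(Fn n * Hn n) ∧
    (sL - sLinv) • (En n * Fn n - Fn n * En n) = Hn n - Hn' n := by
  refine ⟨?_, ?_, ?_⟩
  · rw [Hn, En, Finset.mul_sum, Finset.sum_mul, ← Finset.sum_neg_distrib]
    refine Finset.sum_congr rfl fun i _ => ?_
    rw [tensorPow_mul, tensorPow_mul]
    refine tensorPow_neg_single _ _ i (fun j hj => ?_) ?_
    · by_cases hji : j < i
      · simp [hji]
      · simp [hji, hj, hmat_comm_hmat']
    · simp [he_anti]
  · rw [Hn, Fn, Finset.mul_sum, Finset.sum_mul, ← Finset.sum_neg_distrib]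
    refine Finset.sum_congr rfl fun i _ => ?_
    rw [tensorPow_mul, tensorPow_mul]
    refine tensorPow_neg_single _ _ i (fun j hj => ?_) ?_
    · by_cases hji : j < i
      · simp [hji]
      · simp [hji, hj]
    · simp [hf_anti]
  · have hEn : En n = ∑ i, tensorPow (cE n i) := rfl
    have hFn : Fn n = ∑ i, tensorPow (dF n i) := rfl
    have hEF : (∑ i, tensorPow (cE n i)) * (∑ k, tensorPow (dF n k))
        = ∑ i, ∑ k, tensorPow fun j => cE n i j * dF n k j := by
      rw [Finset.sum_mul_sum]
      exact Finset.sum_congr rfl fun i _ => Finset.sum_congr rfl fun k _ => tensorPow_mul _ _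
    have hFE : (∑ k, tensorPow (dF n k)) * (∑ i, tensorPow (cE n i))
        = ∑ i, ∑ k, tensorPow fun j => dF n k j * cE n i j := by
      rw [Finset.sum_mul_sum, Finset.sum_comm]
      exact Finset.sum_congr rfl fun i _ => Finset.sum_congr rfl fun k _ => tensorPow_mul _ _
    rw [hEn, hFn, hEF, hFE, ← Finset.sum_sub_distrib]
    have hdiag : ∀ i : Fin n,
        ((∑ k, tensorPow fun j => cE n i j * dF n k j) -
          ∑ k, tensorPow fun j => dF n k j * cE n i j)
        = tensorPow (fun j => cE n i j * dF n i j)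
          - tensorPow (fun j => dF n i j * cE n i j) := by
      intro i
      rw [← Finset.sum_sub_distrib]
      refine Finset.sum_eq_single i (fun k _ hk => ?_) (fun h => absurd (Finset.mem_univ i) h)
      rw [sub_eq_zero]
      exact cross i k (Ne.symm hk)
    rw [Finset.sum_congr rfl fun i _ => hdiag i, Finset.smul_sum]
    have hterm : ∀ i : Fin n, (sL - sLinv) •
        (tensorPow (fun j => cE n i j * dF n i j)
          - tensorPow (fun j => dF n i j * cE n i j))
        = Tk n ((i : ℕ) + 1) - Tk n (i : ℕ) := by
      intro i
      have h1 : ∀ j : Fin n, j ≠ i → cE n i j * dF n i j = dF n i j * cE n i j := by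
        intro j hj
        unfold cE dF
        by_cases hlt : j < i <;> simp [hlt, hj]
      have h2 : (sL - sLinv) • (cE n i i * dF n i i - dF n i i * cE n i i)
          = hmat - hmat' := by
        unfold cE dF
        simp only [lt_self_iff_false, if_false, if_pos rfl]
        exact ef_fe
      rw [tensorPow_smul_sub_slot _ _ hmat hmat' i _ h1 h2]
      unfold Tk
      congr 1
      · refine tensorPow_congr fun j => ?_
        by_cases hj : j = i
        · subst hj
          rw [Function.update_self, if_pos (Nat.lt_succ_self _)]
        · rw [Function.update_of_ne hj]
          have hne : (j : ℕ) ≠ (i : ℕ) := fun h => hj (Fin.ext h)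
          unfold cE dF
          by_cases hlt : j < i
          · have hv : (j : ℕ) < (i : ℕ) := Fin.lt_def.mp hlt
            rw [if_pos hlt, if_pos hlt, one_mul, if_pos (by omega)]
          · have hv : ¬ (j : ℕ) < (i : ℕ) := fun h => hlt (Fin.lt_def.mpr h)
            rw [if_neg hlt, if_neg hlt, if_neg hj, if_neg hj, mul_one, if_neg (by omega)]
      · refine tensorPow_congr fun j => ?_
        by_cases hj : j = i
        · subst hj
          rw [Function.update_self, if_neg (by omega)]
        · rw [Function.update_of_ne hj]
          have hne : (j : ℕ) ≠ (i : ℕ) := fun h => hj (Fin.ext h)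
          unfold cE dF
          by_cases hlt : j < i
          · have hv : (j : ℕ) < (i : ℕ) := Fin.lt_def.mp hlt
            rw [if_pos hlt, if_pos hlt, one_mul, if_pos hv]
          · have hv : ¬ (j : ℕ) < (i : ℕ) := fun h => hlt (Fin.lt_def.mpr h)
            rw [if_neg hlt, if_neg hlt, if_neg hj, if_neg hj, mul_one, if_neg hv]
    rw [Finset.sum_congr rfl fun i _ => hterm i,
      Fin.sum_univ_eq_sum_range (fun m => Tk n (m + 1) - Tk n m) n,
      Finset.sum_range_sub (Tk n), Tk_top, Tk_bot]
end
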